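/- Fix d ≥ 3, σ > 0, w, z ∈ ℝ, ε > 0 and c > 0. Define b_N := σ·[√(2 log N) − (log log N + log(4π))/(2√(2 log N))], a_N := σ²/b_N, u_N(x) := a_N x + b_N, and let Φ̄(t) := P(𝒩(0,1) > t) be the standard Gaussian upper tail. Suppose (σ_N) and (m_N) are sequences of reals with 0 < σ_N ≤ σ, σ² − σ_N² ≤ c·(log N)^{−2(1+ε)(d−2)} and |m_N| ≤ u_N(z)^{−1−ε}. Then N·| Φ̄(u_N(w)/σ) − Φ̄((u_N(w) − m_N)/σ_N) | → 0 as N → ∞. -/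

import Mathlib

open MeasureTheory ProbabilityTheory Real Filter Set

/-- `ℤ^d` as functions `Fin d → ℤ`. -/
abbrev Zd (d : ℕ) := Fin d → ℤ

/-- One step of the simple random walk: move from `a` by `±1` in coordinate `i`. -/
def rwStep (d : ℕ) (i : Fin d) (s : Bool) (a : Zd d) : Zd d :=
  Function.update a i (a i + if s then 1 else -1)

/-- `m`-step transition probability of the simple random walk on `ℤ^d`. -/
noncomputable def rwP (d : ℕ) : ℕ → Zd d → Zd d → ℝ
  | 0, a, b => if a = b then 1 else 0
  | (m+1), a, b => (1 / (2 * d)) * ∑ i : Fin d, ∑ s : Bool, rwP d m (rwStep d i s a) b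

/-- The Green's function `g(a,b)` of the simple random walk on `ℤ^d`. -/
noncomputable def green (d : ℕ) (a b : Zd d) : ℝ := ∑' m, rwP d m a b

open Classical in
/-- Probability that the walk started at `a` is at `b` at time `m`, having stayed in `Λ`
at all times `0,…,m`. -/
noncomputable def rwPIn (d : ℕ) (Λ : Set (Zd d)) : ℕ → Zd d → Zd d → ℝ
  | 0, a, b => if a = b ∧ a ∈ Λ then 1 else 0
  | (m+1), a, b =>
      if a ∈ Λ then (1 / (2 * d)) * ∑ i : Fin d, ∑ s : Bool, rwPIn d Λ m (rwStep d i s a) b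
      else 0

/-- Dirichlet Green's function `g_Λ(a,b)` (killed upon exiting `Λ`). -/
noncomputable def greenIn (d : ℕ) (Λ : Set (Zd d)) (a b : Zd d) : ℝ := ∑' m, rwPIn d Λ m a b

open Classical in
/-- Probability that the walk started at `a` first hits `F` at time `m`, at the point `b`. -/
noncomputable def hitP (d : ℕ) (F : Set (Zd d)) : ℕ → Zd d → Zd d → ℝ
  | 0, a, b => if a = b ∧ b ∈ F then 1 else 0
  | (m+1), a, b =>
      if a ∈ F then 0
      else (1 / (2 * d)) * ∑ i : Fin d, ∑ s : Bool, hitP d F m (rwStep d i s a) b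

open Classical in
/-- Probability that the walk started at `a` first hits `F` at time `m`, at the point `b`,
before exiting `Λ`. -/
noncomputable def hitPIn (d : ℕ) (Λ F : Set (Zd d)) : ℕ → Zd d → Zd d → ℝ
  | 0, a, b => if a = b ∧ b ∈ F ∧ b ∈ Λ then 1 else 0
  | (m+1), a, b =>
      if a ∈ Λ ∧ a ∉ F then
        (1 / (2 * d)) * ∑ i : Fin d, ∑ s : Bool, hitPIn d Λ F m (rwStep d i s a) b
      else 0

/-- `ℙ_a(H_F < ∞, S_{H_F} = b)`, the harmonic measure of `F` seen from `a`. -/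
noncomputable def hitMeas (d : ℕ) (F : Set (Zd d)) (a b : Zd d) : ℝ := ∑' m, hitP d F m a b

/-- `ℙ_a(H_F < H_{ℤ^d∖Λ}, S_{H_F} = b)`. -/
noncomputable def hitMeasIn (d : ℕ) (Λ F : Set (Zd d)) (a b : Zd d) : ℝ :=
  ∑' m, hitPIn d Λ F m a b

/-- `(φ_a)_{a∈ℤ^d}` is a centered Gaussian field with covariance `G`: every finite linear
combination is a centered Gaussian with the prescribed variance. -/
def IsGaussianField {Ω : Type*} [MeasurableSpace Ω] (P : Measure Ω) (d : ℕ)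
    (G : Zd d → Zd d → ℝ) (φ : Zd d → Ω → ℝ) : Prop :=
  (∀ a, Measurable (φ a)) ∧
    ∀ c : Zd d →₀ ℝ,
      Measure.map (fun ω => ∑ a ∈ c.support, c a * φ a ω) P =
        gaussianReal 0
          (Real.toNNReal (∑ a ∈ c.support, ∑ b ∈ c.support, c a * c b * G a b))

/-- The centering sequence `b_N` (here `g0 = g(0)` is the variance of the field). -/
noncomputable def bN (g0 : ℝ) (N : ℕ) : ℝ :=
  Real.sqrt g0 * (Real.sqrt (2 * Real.log N) -
    (Real.log (Real.log N) + Real.log (4 * π)) / (2 * Real.sqrt (2 * Real.log N)))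

/-- The scaling sequence `a_N = g(0)/b_N`. -/
noncomputable def aN (g0 : ℝ) (N : ℕ) : ℝ := g0 / bN g0 N

/-- `u_N(z) = a_N z + b_N`. -/
noncomputable def uN (g0 : ℝ) (N : ℕ) (z : ℝ) : ℝ := aN g0 N * z + bN g0 N

/-- The box `V_N = ([0,n-1]^d) ∩ ℤ^d`, `N = n^d`. -/
noncomputable def VN (d n : ℕ) : Finset (Zd d) :=
  Fintype.piFinset fun _ => Finset.Icc (0 : ℤ) ((n : ℤ) - 1)

/-- The `ℓ∞` distance between two points of `ℤ^d`, as a real number. -/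
noncomputable def distInf (d : ℕ) (a b : Zd d) : ℝ :=
  ((Finset.univ.sup fun i => (a i - b i).natAbs : ℕ) : ℝ)

open Classical in
/-- The bulk `V_N^δ` of the box `V_N`. -/
noncomputable def bulk (d n : ℕ) (δ : ℝ) : Finset (Zd d) :=
  (VN d n).filter fun a => ∀ b : Zd d, b ∉ VN d n → δ * n < distInf d a b

/-- The rectangle `∏_i ([0,1] ∩ (lo i, hi i])` in `[0,1]^d`. -/
def rect (d : ℕ) (lo hi : Fin d → ℝ) : Set (Fin d → ℝ) :=
  {t | ∀ i, t i ∈ Set.Icc (0 : ℝ) 1 ∩ Set.Ioc (lo i) (hi i)}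

open Classical in
/-- `nA ∩ V_N = {α ∈ V_N : α/n ∈ A}` for the rectangle `A = rect d lo hi`. -/
noncomputable def rectIdx (d n : ℕ) (lo hi : Fin d → ℝ) : Finset (Zd d) :=
  (VN d n).filter fun a => (fun i => (a i : ℝ) / n) ∈ rect d lo hi

/-- `e^{-y}` for `y ∈ (-∞,+∞]`, with the convention `e^{-∞} = 0`. -/
noncomputable def expE (y : EReal) : ℝ := if y = ⊤ then 0 else Real.exp (-y.toReal)

/-- `u_N` extended to `(-∞,+∞]` by `u_N(+∞) = +∞`. -/
noncomputable def uNE (g0 : ℝ) (N : ℕ) (y : EReal) : EReal :=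
  if y = ⊤ then ⊤ else ((uN g0 N y.toReal : ℝ) : EReal)

/-- `ω(R) = ∫_R e^{-z} dz` for `R ⊆ (-∞,+∞]`. -/
noncomputable def omegaMeas (R : Set EReal) : ℝ :=
  ∫ t in {t : ℝ | (t : EReal) ∈ R}, Real.exp (-t)

/-- `R ⊆ (-∞,+∞]` is a finite union of disjoint intervals `(x,y]` with
`-∞ < x < y ≤ +∞`. -/
def IsFiniteUnionIoc (R : Set EReal) : Prop :=
  ∃ (m : ℕ) (w : Fin m → ℝ) (r : Fin m → EReal),
    (∀ l, (w l : EReal) < r l) ∧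
    (Pairwise fun l l' =>
      Disjoint (Set.Ioc (w l : EReal) (r l)) (Set.Ioc (w l' : EReal) (r l'))) ∧
    R = ⋃ l, Set.Ioc ((w l : ℝ) : EReal) (r l)


/-- `b_N = σ(√(2 log N) - (log log N + log 4π)/(2√(2 log N)))`. -/
noncomputable def bNsigma (σ : ℝ) (N : ℕ) : ℝ :=
  σ * (Real.sqrt (2 * Real.log N) -
    (Real.log (Real.log N) + Real.log (4 * π)) / (2 * Real.sqrt (2 * Real.log N)))

/-- `a_N = σ²/b_N`. -/
noncomputable def aNsigma (σ : ℝ) (N : ℕ) : ℝ := σ ^ 2 / bNsigma σ N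

/-- `u_N(x) = a_N x + b_N`. -/
noncomputable def uNsigma (σ : ℝ) (N : ℕ) (x : ℝ) : ℝ := aNsigma σ N * x + bNsigma σ N

/-- The standard Gaussian upper tail `Φ̄(t) = P(𝒩(0,1) > t)`. -/
noncomputable def gaussTail (t : ℝ) : ℝ := (gaussianReal 0 1 (Set.Ioi t)).toReal

/- ===== auxiliary lemmas for the proof ===== -/

lemma gaussPdf_eq (x : ℝ) : gaussianPDFReal 0 1 x = Real.exp (-x^2/2) / Real.sqrt (2*π) := by
  simp [gaussianPDFReal]
  ring_nf

lemma gaussTail_sub_le' {a b : ℝ} (ha : 0 ≤ a) (hab : a ≤ b) :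
    gaussTail a - gaussTail b ≤ (b - a) * (Real.exp (-a^2/2) / Real.sqrt (2*π)) := by
  have h1 : gaussianReal 0 1 (Set.Ioi a) =
      gaussianReal 0 1 (Set.Ioc a b) + gaussianReal 0 1 (Set.Ioi b) := by
    rw [← measure_union (by simp [Set.disjoint_left]) measurableSet_Ioi,
      Set.Ioc_union_Ioi_eq_Ioi hab]
  have h2 : gaussTail a - gaussTail b = (gaussianReal 0 1 (Set.Ioc a b)).toReal := by
    unfold gaussTail
    rw [h1, ENNReal.toReal_add (measure_ne_top _ _) (measure_ne_top _ _)]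
    ring
  rw [h2, gaussianReal_apply_eq_integral 0 one_ne_zero,
    ENNReal.toReal_ofReal (integral_nonneg fun x => gaussianPDFReal_nonneg 0 1 x)]
  have hmono : ∀ x ∈ Set.Ioc a b, gaussianPDFReal 0 1 x ≤ gaussianPDFReal 0 1 a := by
    intro x hx
    rw [gaussPdf_eq, gaussPdf_eq]
    gcongr rexp (-?_^2/2) / Real.sqrt (2*π)
    exact hx.1.le
  calc ∫ x in Set.Ioc a b, gaussianPDFReal 0 1 x
      ≤ ∫ _x in Set.Ioc a b, gaussianPDFReal 0 1 a := by
        apply setIntegral_mono_on (integrable_gaussianPDFReal 0 1).restrict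
          (integrableOn_const measure_Ioc_lt_top.ne enorm_ne_top) measurableSet_Ioc hmono
    _ = (b - a) * (Real.exp (-a^2/2) / Real.sqrt (2*π)) := by
        rw [setIntegral_const, gaussPdf_eq]
        simp [Real.volume_Ioc, ENNReal.toReal_ofReal (sub_nonneg.2 hab), hab]

lemma gaussTail_anti : Antitone gaussTail := fun a b hab =>
  ENNReal.toReal_mono (measure_ne_top _ _) (measure_mono (Set.Ioi_subset_Ioi hab))

lemma abs_gaussTail_sub_le {t s δ : ℝ} (hδ : |s - t| ≤ δ) (h0 : 0 ≤ t - δ) :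
    |gaussTail t - gaussTail s| ≤ δ * (Real.exp (t*δ) * Real.exp (-t^2/2) / Real.sqrt (2*π)) := by
  have habs := abs_le.1 hδ
  set m := min t s with hm
  set M := max t s with hM
  have hm0 : t - δ ≤ m := le_min (by linarith) (by linarith)
  have h0m : 0 ≤ m := le_trans h0 hm0
  have hMm : M - m ≤ δ := by
    rcases le_total t s with h | h
    · simp [hm, hM, min_eq_left h, max_eq_right h]; linarith
    · simp [hm, hM, min_eq_right h, max_eq_left h]; linarith
  have key : gaussTail m - gaussTail M ≤ (M - m) * (Real.exp (-m^2/2) / Real.sqrt (2*π)) :=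
    gaussTail_sub_le' h0m (min_le_max)
  have habs2 : |gaussTail t - gaussTail s| = gaussTail m - gaussTail M := by
    rcases le_total t s with h | h
    · rw [abs_of_nonneg (by linarith [gaussTail_anti h]), hm, hM, min_eq_left h, max_eq_right h]
    · rw [abs_of_nonpos (by linarith [gaussTail_anti h]), hm, hM, min_eq_right h, max_eq_left h]
      ring
  have hexp : Real.exp (-m^2/2) ≤ Real.exp (t*δ) * Real.exp (-t^2/2) := by
    rw [← Real.exp_add]
    apply Real.exp_le_exp.2
    nlinarith [sq_nonneg (t - δ - m), sq_nonneg (t-δ)]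
  rw [habs2]
  have h1 : gaussTail m - gaussTail M ≤ δ * (Real.exp (-m^2/2) / Real.sqrt (2*π)) := by
    refine le_trans key ?_
    have hpdf : 0 ≤ Real.exp (-m^2/2) / Real.sqrt (2*π) := by positivity
    exact mul_le_mul_of_nonneg_right hMm hpdf
  refine le_trans h1 ?_
  have hδ0 : 0 ≤ δ := le_trans (abs_nonneg _) hδ
  apply mul_le_mul_of_nonneg_left _ hδ0
  apply div_le_div_of_nonneg_right hexp
  positivity

lemma ev_log_ge (C : ℝ) : ∀ᶠ N : ℕ in atTop, C ≤ Real.log N :=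
  (Real.tendsto_log_atTop.comp tendsto_natCast_atTop_atTop).eventually_ge_atTop C

lemma ev_rpow_le {r K : ℝ} (hr : 0 < r) (hK : 0 < K) :
    ∀ᶠ N : ℕ in atTop, (Real.log N) ^ (-r) ≤ K :=
  (((tendsto_rpow_neg_atTop hr).comp
    (Real.tendsto_log_atTop.comp tendsto_natCast_atTop_atTop)).eventually_le_const hK)
set_option maxHeartbeats 1000000 in
/-- The core Gaussian comparison estimate for the Stein–Chen term `b₃`:
shifting the level by `m_N` and the standard deviation from `σ` to `σ_N` changes the Gaussian
tail at `u_N(w)` by `o(1/N)`. -/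
theorem gaussian_tail_comparison
    (d : ℕ) (hd : 3 ≤ d) (σ w z ε c : ℝ)
    (hσ : 0 < σ) (hε : 0 < ε) (hc : 0 < c)
    (σN mN : ℕ → ℝ)
    (hσN : ∀ N, 0 < σN N ∧ σN N ≤ σ)
    (hvar : ∀ᶠ N : ℕ in atTop,
      σ ^ 2 - σN N ^ 2 ≤ c * (Real.log N) ^ (-(2 : ℝ) * (1 + ε) * ((d : ℝ) - 2)))
    (hm : ∀ᶠ N : ℕ in atTop, |mN N| ≤ (uNsigma σ N z) ^ (-(1 : ℝ) - ε)) :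
    Tendsto
      (fun N : ℕ => (N : ℝ) *
        |gaussTail (uNsigma σ N w / σ) - gaussTail ((uNsigma σ N w - mN N) / σN N)|)
      atTop (nhds 0) := by
  have hd3 : (3:ℝ) ≤ (d:ℝ) := by exact_mod_cast hd
  set M : ℝ := max |w| |z| with hMdef
  have hM0 : 0 ≤ M := le_trans (abs_nonneg w) (le_max_left _ _)
  set K : ℝ := Real.exp (2*|w|+1) * 2 * (8*c/σ^2 + 2/σ) with hKdef
  have hcoef : 0 < 8*c/σ^2 + 2/σ :=
    add_pos (div_pos (by linarith) (pow_pos hσ 2)) (div_pos two_pos hσ)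
  have hK0 : 0 < K := mul_pos (mul_pos (Real.exp_pos _) two_pos) hcoef
  set p : ℝ := (1+ε/2)/(2*(1+ε)) with hpdef
  apply squeeze_zero'
    (g := fun N : ℕ => K * ((Real.log N) ^ (-(1:ℝ)) + (Real.log N) ^ (-(ε/4))))
  · exact Eventually.of_forall fun N => by positivity
  · -- the eventual bound
    have E1 := ev_log_ge (max 16 (4*M))
    have E4 : ∀ᶠ N : ℕ in atTop, (Real.log N) ^ (-(2+2*ε)) ≤ (3*σ^2/4)/c :=
      ev_rpow_le (by linarith) (div_pos (by positivity) hc)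
    have E5 : ∀ᶠ N : ℕ in atTop, (Real.log N) ^ (p - 1/2) ≤ σ * Real.sqrt 2 / 4 := by
      have hpe : p - 1/2 = -(ε/(4*(1+ε))) := by
        rw [hpdef]; field_simp; ring
      rw [hpe]
      exact ev_rpow_le (div_pos hε (by linarith))
        (div_pos (mul_pos hσ (Real.sqrt_pos.mpr two_pos)) (by norm_num))
    have E6a : ∀ᶠ N : ℕ in atTop, (Real.log N) ^ (-(1:ℝ)) ≤ (1/8)/(8*c/σ^2) :=
      ev_rpow_le one_pos (div_pos (by norm_num) (div_pos (by linarith) (pow_pos hσ 2)))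
    have E6b : ∀ᶠ N : ℕ in atTop, (Real.log N) ^ (-(ε/4)) ≤ (1/8)/(2/σ) :=
      ev_rpow_le (by linarith) (div_pos (by norm_num) (div_pos (by norm_num) hσ))
    filter_upwards [E1, hvar, hm, E4, E5, E6a, E6b] with N hLmax hvarN hmN h4 h5 h6a h6b
    obtain ⟨hσn0, hσnσ⟩ := hσN N
    set L := Real.log N with hLdef
    have hL16 : (16:ℝ) ≤ L := le_trans (le_max_left _ _) hLmax
    have hLM : 4*M ≤ L := le_trans (le_max_right _ _) hLmax
    have hL1 : (1:ℝ) ≤ L := by linarith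
    have hL0 : (0:ℝ) < L := by linarith
    have hN0 : (0:ℝ) < (N:ℝ) := by
      rcases Nat.eq_zero_or_pos N with h | h
      · exfalso; rw [hLdef, h] at hL0; simp at hL0
      · exact_mod_cast h
    have hexpL : Real.exp L = N := Real.exp_log hN0
    set A := Real.sqrt (2*L) with hAdef
    have hA0 : 0 < A := Real.sqrt_pos.mpr (by linarith)
    have hA2 : A^2 = 2*L := Real.sq_sqrt (by linarith)
    have hsqrt16 : Real.sqrt 16 = 4 := by
      rw [show (16:ℝ) = 4^2 by norm_num, Real.sqrt_sq (by norm_num : (0:ℝ) ≤ 4)]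
    have hA4 : 4 ≤ A := by
      rw [hAdef, ← hsqrt16]
      exact Real.sqrt_le_sqrt (by linarith)
    have hsqL : Real.sqrt L ^ 2 = L := Real.sq_sqrt hL0.le
    have hsqL0 : 0 ≤ Real.sqrt L := Real.sqrt_nonneg L
    have hsqL4 : 4 ≤ Real.sqrt L := by
      rw [← hsqrt16]; exact Real.sqrt_le_sqrt (by linarith)
    have hA2sq : A = Real.sqrt 2 * Real.sqrt L := Real.sqrt_mul (by norm_num) L
    have hsqrt4 : Real.sqrt 4 = 2 := by
      rw [show (4:ℝ) = 2^2 by norm_num, Real.sqrt_sq (by norm_num : (0:ℝ) ≤ 2)]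
    have hsqrt2 : Real.sqrt 2 ≤ 2 := by
      have h := Real.sqrt_le_sqrt (by norm_num : (2:ℝ) ≤ 4)
      rw [hsqrt4] at h
      exact h
    have hAle : A ≤ 2 * Real.sqrt L := by
      rw [hA2sq]
      exact mul_le_mul_of_nonneg_right hsqrt2 hsqL0
    set B := (Real.log L + Real.log (4*π))/(2*A) with hBdef
    have hlogL : Real.log L ≤ 2*Real.sqrt L - 2 := by
      have h2 : Real.log (Real.sqrt L) ≤ Real.sqrt L - 1 :=
        Real.log_le_sub_one_of_pos (Real.sqrt_pos.mpr hL0)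
      rw [Real.log_sqrt hL0.le] at h2; linarith
    have hlog4pi : Real.log (4*π) ≤ 3 := by
      rw [Real.log_le_iff_le_exp (by positivity)]
      have h1 : (4:ℝ)*π ≤ 16 := by linarith [Real.pi_le_four]
      have h2 : Real.exp 1 ^ (3:ℕ) = Real.exp 3 := by
        rw [← Real.exp_nat_mul]; norm_num
      calc (4:ℝ)*π ≤ 16 := h1
        _ ≤ (2.7182818283:ℝ)^(3:ℕ) := by norm_num
        _ ≤ Real.exp 1^(3:ℕ) := pow_le_pow_left₀ (by norm_num) Real.exp_one_gt_d9.le 3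
        _ = Real.exp 3 := h2
    have hlogL0 : 0 ≤ Real.log L := Real.log_nonneg hL1
    have hlog4pi0 : 0 ≤ Real.log (4*π) := Real.log_nonneg (by linarith [Real.pi_gt_three])
    have hB0 : 0 ≤ B := div_nonneg (by linarith) (by linarith)
    have hBA : B ≤ A/4 := by
      rw [hBdef, div_le_iff₀ (by linarith : (0:ℝ) < 2*A)]
      have hLs : 2*Real.sqrt L + 1 ≤ L := by
        have h := mul_le_mul_of_nonneg_right hsqL4 hsqL0
        have h2 : Real.sqrt L * Real.sqrt L = L := Real.mul_self_sqrt hL0.le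
        linarith
      calc Real.log L + Real.log (4*π) ≤ L := by linarith
        _ = A^2/2 := by linarith
        _ = A/4*(2*A) := by ring
    -- bounds for b, a, u
    have hb : bNsigma σ N = σ * (A - B) := by
      rw [bNsigma, ← hLdef, ← hAdef, ← hBdef]
    have hbpos : 0 < bNsigma σ N := by
      rw [hb]; exact mul_pos hσ (by linarith)
    have hb_lb : σ * (3*A/4) ≤ bNsigma σ N := by
      rw [hb]; exact mul_le_mul_of_nonneg_left (by linarith) hσ.le
    have hb_ub : bNsigma σ N ≤ σ * A := by
      rw [hb]; exact mul_le_mul_of_nonneg_left (by linarith) hσ.le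
    have ha : aNsigma σ N = σ^2 / bNsigma σ N := rfl
    have hapos : 0 < aNsigma σ N := by rw [ha]; positivity
    have ha_ub : aNsigma σ N ≤ 2*σ/A := by
      rw [ha, div_le_div_iff₀ hbpos hA0]
      have h1 := mul_le_mul_of_nonneg_left hb_lb (by linarith : (0:ℝ) ≤ 2*σ)
      have h2 : (0:ℝ) ≤ σ^2*A := mul_nonneg (sq_nonneg σ) hA0.le
      linarith [h1, h2]
    have hwM : |w| ≤ M := le_max_left _ _
    have hzM : |z| ≤ M := le_max_right _ _
    have hML : M ≤ A^2/8 := by rw [hA2]; linarith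
    have haw : ∀ x : ℝ, |x| ≤ M → |aNsigma σ N * x| ≤ σ*A/4 := by
      intro x hx
      rw [abs_mul, abs_of_pos hapos]
      calc aNsigma σ N * |x| ≤ (2*σ/A) * (A^2/8) := by
            apply mul_le_mul ha_ub (hx.trans hML) (abs_nonneg x)
              (le_of_lt (div_pos (by linarith) hA0))
        _ = σ*A/4 := by field_simp; ring
    have hu_lb : ∀ x : ℝ, |x| ≤ M → σ*A/2 ≤ uNsigma σ N x := by
      intro x hx
      have h2 := abs_le.1 (haw x hx)
      rw [uNsigma]
      linarith [hb_lb, h2.1]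
    have hu_ub : ∀ x : ℝ, |x| ≤ M → uNsigma σ N x ≤ 2*σ*A := by
      intro x hx
      have h2 := abs_le.1 (haw x hx)
      rw [uNsigma]
      have hσA : (0:ℝ) ≤ σ*A := mul_nonneg hσ.le hA0.le
      linarith [hb_ub, h2.2]
    set t := uNsigma σ N w / σ with htdef
    set s := (uNsigma σ N w - mN N) / σN N with hsdef
    clear_value t s
    have ht_lb : A/2 ≤ t := by
      rw [htdef, le_div_iff₀ hσ]
      linarith [hu_lb w hwM]
    have ht_ub : t ≤ 2*A := by
      rw [htdef, div_le_iff₀ hσ]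
      linarith [hu_ub w hwM]
    have ht1 : 1 ≤ t := by linarith
    -- σN bounds
    have hrpow_mono : L ^ (-(2:ℝ) * (1 + ε) * ((d:ℝ) - 2)) ≤ L ^ (-(2+2*ε)) := by
      apply Real.rpow_le_rpow_of_exponent_le hL1
      have h := mul_nonneg (by linarith : (0:ℝ) ≤ 1+ε) (by linarith : (0:ℝ) ≤ (d:ℝ)-3)
      linarith [h]
    have hvar2 : σ^2 - σN N^2 ≤ c * L ^ (-(2+2*ε)) :=
      le_trans hvarN (mul_le_mul_of_nonneg_left hrpow_mono hc.le)
    have hcL : c * L ^ (-(2+2*ε)) ≤ 3*σ^2/4 := by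
      have h := mul_le_mul_of_nonneg_left h4 hc.le
      calc c * L ^ (-(2+2*ε)) ≤ c * ((3*σ^2/4)/c) := h
        _ = 3*σ^2/4 := by
          rw [mul_comm, div_mul_cancel₀ _ (ne_of_gt hc)]
    have hσnhalf : σ/2 ≤ σN N := by
      by_contra hcon
      push_neg at hcon
      have hlt : σN N^2 < (σ/2)^2 := pow_lt_pow_left₀ hcon hσn0.le (by norm_num)
      have h2 : σ^2 - σN N^2 ≤ 3*σ^2/4 := le_trans hvar2 hcL
      linarith
    have hdiffσ : σ - σN N ≤ (c/σ) * L ^ (-(2+2*ε)) := by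
      rw [div_mul_eq_mul_div, le_div_iff₀ hσ]
      linarith [mul_nonneg hσn0.le (sub_nonneg.2 hσnσ), hvar2]
    -- the increment bound δ
    set δ : ℝ := (8*c/σ^2) * L ^ (-(3/2:ℝ)) + (2/σ) * L ^ (-(1/2:ℝ) - ε/4) with hδdef
    clear_value δ
    have hrp1 : (0:ℝ) ≤ L ^ (-(3/2:ℝ)) := Real.rpow_nonneg hL0.le _
    have hrp2 : (0:ℝ) ≤ L ^ (-(1/2:ℝ) - ε/4) := Real.rpow_nonneg hL0.le _
    have hc8 : (0:ℝ) ≤ 8*c/σ^2 := div_nonneg (by linarith) (sq_nonneg σ)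
    have hc2' : (0:ℝ) ≤ 2/σ := by positivity
    have hδ0 : 0 ≤ δ := by
      rw [hδdef]
      exact add_nonneg (mul_nonneg hc8 hrp1) (mul_nonneg hc2' hrp2)
    have hLhalf : Real.sqrt L = L ^ ((1:ℝ)/2) := by
      rw [Real.sqrt_eq_rpow]
    have hu0 : 0 ≤ uNsigma σ N w := le_trans (by linarith [mul_nonneg hσ.le hA0.le] : (0:ℝ) ≤ σ*A/2) (hu_lb w hwM)
    have hT1nonneg : 0 ≤ uNsigma σ N w * (σ - σN N) / (σ * σN N) :=
      div_nonneg (mul_nonneg hu0 (by linarith)) (mul_nonneg hσ.le hσn0.le)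
    -- term 1 bound
    have hterm1 : uNsigma σ N w * (σ - σN N)/(σ*σN N) ≤ (8*c/σ^2) * L ^ (-(3/2:ℝ)) := by
      have h1 : uNsigma σ N w * (σ - σN N) ≤ (2*σ*A) * ((c/σ) * L ^ (-(2+2*ε))) :=
        mul_le_mul (hu_ub w hwM) hdiffσ (by linarith)
          (mul_nonneg (by linarith) hA0.le)
      have h2 : uNsigma σ N w * (σ - σN N)/(σ*σN N) ≤
          ((2*σ*A) * ((c/σ) * L ^ (-(2+2*ε))))/(σ*(σ/2)) := by
        apply div_le_div₀ (le_trans (mul_nonneg hu0 (by linarith)) h1) h1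
          (mul_pos hσ (by linarith)) (mul_le_mul_of_nonneg_left hσnhalf hσ.le)
      have h3 : ((2*σ*A) * ((c/σ) * L ^ (-(2+2*ε))))/(σ*(σ/2)) =
          (4*c/σ^2) * (A * L ^ (-(2+2*ε))) := by
        field_simp
        ring
      have h4' : A * L ^ (-(2+2*ε)) ≤ 2 * (L^((1:ℝ)/2) * L ^ (-(2+2*ε))) := by
        have h := mul_le_mul_of_nonneg_right hAle (Real.rpow_nonneg hL0.le (-(2+2*ε)))
        rw [hLhalf] at h
        linarith [h]
      have h5' : L^((1:ℝ)/2) * L ^ (-(2+2*ε)) ≤ L ^ (-(3/2:ℝ)) := by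
        rw [← Real.rpow_add hL0]
        exact Real.rpow_le_rpow_of_exponent_le hL1 (by linarith)
      have hc4 : (0:ℝ) ≤ 4*c/σ^2 := div_nonneg (by linarith) (sq_nonneg σ)
      calc uNsigma σ N w * (σ - σN N)/(σ*σN N)
          ≤ (4*c/σ^2) * (A * L ^ (-(2+2*ε))) := h2.trans_eq h3
        _ ≤ (4*c/σ^2) * (2 * (L^((1:ℝ)/2) * L ^ (-(2+2*ε)))) :=
            mul_le_mul_of_nonneg_left h4' hc4
        _ ≤ (4*c/σ^2) * (2 * L ^ (-(3/2:ℝ))) :=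
            mul_le_mul_of_nonneg_left
              (mul_le_mul_of_nonneg_left h5' (by norm_num)) hc4
        _ = (8*c/σ^2) * L ^ (-(3/2:ℝ)) := by ring
    -- term 2 bound
    have hpz0 : (0:ℝ) < L ^ p := Real.rpow_pos_of_pos hL0 p
    have hpz : L ^ p ≤ uNsigma σ N z := by
      have h1 : L ^ p = L ^ (p - 1/2) * L ^ ((1:ℝ)/2) := by
        rw [← Real.rpow_add hL0]; ring_nf
      have h2 : L ^ (p - 1/2) * L ^ ((1:ℝ)/2) ≤ (σ * Real.sqrt 2 / 4) * L ^ ((1:ℝ)/2) :=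
        mul_le_mul_of_nonneg_right h5 (Real.rpow_nonneg hL0.le _)
      have h3 : (σ * Real.sqrt 2 / 4) * L ^ ((1:ℝ)/2) ≤ σ*A/2 := by
        rw [← hLhalf, hA2sq]
        linarith [mul_nonneg (mul_nonneg hσ.le (Real.sqrt_nonneg 2)) hsqL0]
      linarith [h1 ▸ le_trans h2 (h3.trans (hu_lb z hzM))]
    have hmz : (uNsigma σ N z) ^ (-(1:ℝ) - ε) ≤ L ^ (-(1/2:ℝ) - ε/4) := by
      calc (uNsigma σ N z) ^ (-(1:ℝ) - ε) ≤ (L ^ p) ^ (-(1:ℝ) - ε) :=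
            Real.rpow_le_rpow_of_nonpos hpz0 hpz (by linarith)
        _ = L ^ (p * (-(1:ℝ) - ε)) := (Real.rpow_mul hL0.le p _).symm
        _ = L ^ (-(1/2:ℝ) - ε/4) := by
            rw [show p * (-(1:ℝ) - ε) = -(1/2:ℝ) - ε/4 by rw [hpdef]; field_simp; ring]
    have hterm2 : |mN N| / σN N ≤ (2/σ) * L ^ (-(1/2:ℝ) - ε/4) := by
      have h1 : |mN N| ≤ L ^ (-(1/2:ℝ) - ε/4) := le_trans hmN hmz
      have h2 : |mN N| / σN N ≤ L ^ (-(1/2:ℝ) - ε/4) / (σ/2) :=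
        div_le_div₀ hrp2 h1 (by linarith) hσnhalf
      have h3 : L ^ (-(1/2:ℝ) - ε/4) / (σ/2) = (2/σ) * L ^ (-(1/2:ℝ) - ε/4) := by
        field_simp
      linarith
    -- |s - t| ≤ δ
    have hst : s - t = uNsigma σ N w * (σ - σN N)/(σ*σN N) - mN N / σN N := by
      rw [hsdef, htdef]
      field_simp
      ring
    have hδst : |s - t| ≤ δ := by
      rw [hst]
      refine le_trans (abs_sub _ _) ?_
      rw [abs_of_nonneg hT1nonneg, abs_div, abs_of_pos hσn0, hδdef]
      exact add_le_add hterm1 hterm2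
    -- t·δ small
    have hLδ : L^((1:ℝ)/2) * δ = (8*c/σ^2)*L^(-(1:ℝ)) + (2/σ)*L^(-(ε/4)) := by
      rw [hδdef, mul_add,
        show L^((1:ℝ)/2) * ((8*c/σ^2) * L^(-(3/2:ℝ)))
          = (8*c/σ^2)*(L^((1:ℝ)/2) * L^(-(3/2:ℝ))) by ring,
        show L^((1:ℝ)/2) * ((2/σ) * L^(-(1/2:ℝ) - ε/4))
          = (2/σ)*(L^((1:ℝ)/2) * L^(-(1/2:ℝ) - ε/4)) by ring,
        ← Real.rpow_add hL0, ← Real.rpow_add hL0,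
        show (1:ℝ)/2 + -(3/2:ℝ) = -(1:ℝ) by norm_num,
        show (1:ℝ)/2 + (-(1/2:ℝ) - ε/4) = -(ε/4) by ring]
    have ht4L : t ≤ 4 * L^((1:ℝ)/2) := by
      rw [← hLhalf]; linarith [ht_ub, hAle]
    have h32 : (8*c/σ^2) * L^(-(1:ℝ)) ≤ 1/8 := by
      have hpos : (0:ℝ) < 8*c/σ^2 := div_pos (by linarith) (pow_pos hσ 2)
      have h := mul_le_mul_of_nonneg_left h6a hpos.le
      calc (8*c/σ^2) * L^(-(1:ℝ)) ≤ (8*c/σ^2) * ((1/8)/(8*c/σ^2)) := h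
        _ = 1/8 := by
          rw [mul_comm, div_mul_cancel₀ _ (ne_of_gt hpos)]
    have h8σ : (2/σ) * L^(-(ε/4)) ≤ 1/8 := by
      have hpos : (0:ℝ) < 2/σ := div_pos (by norm_num) hσ
      have h := mul_le_mul_of_nonneg_left h6b hpos.le
      calc (2/σ) * L^(-(ε/4)) ≤ (2/σ) * ((1/8)/(2/σ)) := h
        _ = 1/8 := by
          rw [mul_comm, div_mul_cancel₀ _ (ne_of_gt hpos)]
    have htδ : t * δ ≤ 1 := by
      have h1 : t*δ ≤ 4*L^((1:ℝ)/2)*δ := mul_le_mul_of_nonneg_right ht4L hδ0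
      have h2 : 4*L^((1:ℝ)/2)*δ = 4*((8*c/σ^2)*L^(-(1:ℝ)) + (2/σ)*L^(-(ε/4))) := by
        rw [mul_assoc, hLδ]
      linarith
    have hδ1 : δ ≤ 1 := le_trans (le_mul_of_one_le_left hδ0 ht1) htδ
    have h0td : 0 ≤ t - δ := by linarith
    have hmain := abs_gaussTail_sub_le hδst h0td
    -- bound N * exp(-t²/2)
    have h2AB : 2*A*B = Real.log L + Real.log (4*π) := by
      rw [hBdef]; field_simp
    have htABC : t = A - B + aNsigma σ N * w / σ := by
      rw [htdef, uNsigma, hb]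
      field_simp
      ring
    have hAa : A * aNsigma σ N ≤ 2*σ := by
      have h := mul_le_mul_of_nonneg_left ha_ub hA0.le
      calc A * aNsigma σ N ≤ A * (2*σ/A) := h
        _ = 2*σ := by field_simp
    have hCabs : |A * (aNsigma σ N * w / σ)| ≤ 2*|w| := by
      rw [abs_mul, abs_div, abs_mul, abs_of_pos hA0, abs_of_pos hapos, abs_of_pos hσ,
        mul_div_assoc']
      rw [div_le_iff₀ hσ]
      linarith [mul_le_mul_of_nonneg_right hAa (abs_nonneg w)]
    have ht2 : 2*L - (Real.log L + Real.log (4*π)) + 2*(A*(aNsigma σ N * w/σ)) ≤ t^2 := by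
      rw [htABC]
      linarith [sq_nonneg (aNsigma σ N * w/σ - B), hA2, h2AB]
    have hNexp : (N:ℝ) * Real.exp (-t^2/2) ≤
        Real.sqrt (2*L) * Real.sqrt (2*π) * Real.exp (2*|w|) := by
      have hac : -(A*(aNsigma σ N * w/σ)) ≤ 2*|w| := by
        have h := abs_le.1 hCabs; linarith [h.1]
      have h1 : -t^2/2 ≤ -L + (Real.log L + Real.log (4*π))/2 + 2*|w| := by linarith
      calc (N:ℝ) * Real.exp (-t^2/2) = Real.exp L * Real.exp (-t^2/2) := by rw [hexpL]
        _ = Real.exp (L + -t^2/2) := (Real.exp_add _ _).symm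
        _ ≤ Real.exp ((Real.log L + Real.log (4*π))/2 + 2*|w|) :=
            Real.exp_le_exp.2 (by linarith)
        _ = Real.exp ((Real.log L + Real.log (4*π))/2) * Real.exp (2*|w|) :=
            Real.exp_add _ _
        _ = Real.sqrt (L * (4*π)) * Real.exp (2*|w|) := by
            rw [← Real.log_mul (ne_of_gt hL0) (by positivity), Real.exp_half,
              Real.exp_log (by positivity)]
        _ = Real.sqrt (2*L) * Real.sqrt (2*π) * Real.exp (2*|w|) := by
            rw [show L * (4*π) = (2*L)*(2*π) by ring,
              Real.sqrt_mul (by linarith : (0:ℝ) ≤ 2*L) (2*π)]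
    have hsqrt2π : (0:ℝ) < Real.sqrt (2*π) := Real.sqrt_pos.mpr (by positivity)
    have hE0 : (0:ℝ) < Real.exp (2*|w|+1) := Real.exp_pos _
    calc (N:ℝ) * |gaussTail t - gaussTail s|
        ≤ (N:ℝ) * (δ * (Real.exp (t*δ) * Real.exp (-t^2/2) / Real.sqrt (2*π))) :=
          mul_le_mul_of_nonneg_left hmain hN0.le
      _ = δ * Real.exp (t*δ) * ((N:ℝ) * Real.exp (-t^2/2)) / Real.sqrt (2*π) := by ring
      _ ≤ δ * Real.exp 1 * (Real.sqrt (2*L) * Real.sqrt (2*π) * Real.exp (2*|w|))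
            / Real.sqrt (2*π) := by
          apply div_le_div_of_nonneg_right _ hsqrt2π.le
          have hexp1 : Real.exp (t*δ) ≤ Real.exp 1 := Real.exp_le_exp.2 htδ
          exact mul_le_mul (mul_le_mul_of_nonneg_left hexp1 hδ0) hNexp
            (by positivity) (mul_nonneg hδ0 (Real.exp_pos 1).le)
      _ = δ * (Real.exp (2*|w|+1) * Real.sqrt (2*L)) := by
          rw [Real.exp_add]
          field_simp
      _ ≤ K * (L ^ (-(1:ℝ)) + L ^ (-(ε/4))) := by
          have h2L : Real.sqrt (2*L) ≤ 2 * L^((1:ℝ)/2) := by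
            rw [← hLhalf, ← hAdef]; exact hAle
          have hr1 : (0:ℝ) ≤ L^(-(1:ℝ)) := Real.rpow_nonneg hL0.le _
          have hr2 : (0:ℝ) ≤ L^(-(ε/4)) := Real.rpow_nonneg hL0.le _
          calc δ * (Real.exp (2*|w|+1) * Real.sqrt (2*L))
              ≤ δ * (Real.exp (2*|w|+1) * (2 * L^((1:ℝ)/2))) :=
                mul_le_mul_of_nonneg_left (mul_le_mul_of_nonneg_left h2L hE0.le) hδ0
            _ = Real.exp (2*|w|+1) * 2 * (L^((1:ℝ)/2) * δ) := by ring
            _ = Real.exp (2*|w|+1) * 2 *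
                ((8*c/σ^2)*L^(-(1:ℝ)) + (2/σ)*L^(-(ε/4))) := by rw [hLδ]
            _ ≤ K * (L ^ (-(1:ℝ)) + L ^ (-(ε/4))) := by
                rw [hKdef]
                linarith [mul_nonneg (mul_nonneg hE0.le hc8) hr2,
                  mul_nonneg (mul_nonneg hE0.le hc2') hr1]
  · -- the bound tends to 0
    have h1 : Tendsto (fun N : ℕ => (Real.log N) ^ (-(1:ℝ))) atTop (nhds 0) :=
      (tendsto_rpow_neg_atTop one_pos).comp
        (Real.tendsto_log_atTop.comp tendsto_natCast_atTop_atTop)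
    have h2 : Tendsto (fun N : ℕ => (Real.log N) ^ (-(ε/4))) atTop (nhds 0) :=
      (tendsto_rpow_neg_atTop (by linarith)).comp
        (Real.tendsto_log_atTop.comp tendsto_natCast_atTop_atTop)
    simpa using (h1.add h2).const_mul K
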